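/- Assume additionally ν(X) > 0. For every f ∈ L^∞(X,ν), the ν-essential limsup gives a pointwise meaning to the essential supremum: sup_{x ∈ X} f^★(x) = ν-ess sup_{x ∈ X} f(x). -/

import Mathlib

open MeasureTheory Filter Metric
open scoped ENNReal Topology

noncomputable section

/-- `n`-dimensional Euclidean space. -/
abbrev Euc (n : ℕ) := EuclideanSpace ℝ (Fin n)

/-- The `ν`-essential limsup of `f` on `X` at `x`:
`f^★(x) = lim_{ε→0} (ν-ess sup_{y ∈ B_ε(x)} f(y)) = inf_{ε>0} (ν-ess sup_{y ∈ B_ε(x)} f(y))`,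
where `B_ε(x) = X ∩ {y : |y − x| < ε}` is the open `ε`-ball of `X` centred at `x`. -/
def essLimSup {n : ℕ} (ν : Measure (Euc n)) (X : Set (Euc n)) (f : Euc n → ℝ)
    (x : Euc n) : ℝ :=
  ⨅ ε : Set.Ioi (0 : ℝ), essSup f (ν.restrict (X ∩ Metric.ball x (ε : ℝ)))

/-- **The essential limsup gives a pointwise meaning to the essential supremum.**
Let `X ⊆ ℝⁿ` be a Borel set and `ν` a finite positive Radon measure on `X` with `ν(X) > 0`.
For every `f ∈ L^∞(X,ν)`, `sup_{x ∈ X} f^★(x) = ν-ess sup_{x ∈ X} f(x)`. -/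
theorem iSup_essLimSup_eq_essSup
    {n : ℕ} (X : Set (Euc n)) (hX : MeasurableSet X)
    (ν : Measure (Euc n)) [IsFiniteMeasure ν] (hνX : ν Xᶜ = 0) (hν0 : 0 < ν X)
    (f : Euc n → ℝ) (hf : MemLp f ⊤ (ν.restrict X)) :
    (⨆ x : X, essLimSup ν X f (x : Euc n)) = essSup f (ν.restrict X) := by
  classical
  -- X has full measure, so `ν.restrict X = ν`.
  have hXmem : ∀ᵐ y ∂ν, y ∈ X := by
    rw [ae_iff]; exact hνX
  have hrX : ν.restrict X = ν := Measure.restrict_eq_self_of_ae_mem hXmem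
  rw [hrX] at hf ⊢
  have hball : ∀ (x : Euc n) (ε : ℝ), ν.restrict (X ∩ ball x ε) = ν.restrict (ball x ε) := by
    intro x ε
    rw [Set.inter_comm, ← Measure.restrict_restrict measurableSet_ball, hrX]
  have hLim : ∀ x : Euc n, essLimSup ν X f x
      = ⨅ ε : Set.Ioi (0 : ℝ), essSup f (ν.restrict (ball x (ε : ℝ))) := by
    intro x; unfold essLimSup; simp_rw [hball]
  have hνuniv : ν Set.univ ≠ 0 := fun h =>
    (hν0.trans_le (measure_mono (Set.subset_univ X))).ne' (by rw [h])
  -- a uniform a.e. bound on `f`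
  obtain ⟨C, hC0, hC⟩ : ∃ C : ℝ, 0 ≤ C ∧ ∀ᵐ y ∂ν, |f y| ≤ C := by
    refine ⟨(eLpNormEssSup f ν).toReal, ENNReal.toReal_nonneg, ?_⟩
    have h2 : eLpNormEssSup f ν ≠ ∞ := by
      have := hf.2; rw [eLpNorm_exponent_top] at this; exact this.ne
    filter_upwards [ae_le_eLpNormEssSup (f := f) (μ := ν)] with y hy
    have := ENNReal.toReal_mono h2 hy
    simpa [Real.norm_eq_abs] using this
  -- `C` is in the defining set of any `essSup` w.r.t. a measure `≪ ν`
  have hCmem : ∀ μ' : Measure (Euc n), μ' ≪ ν → μ' {x | C < f x} = 0 := by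
    intro μ' hac
    apply hac
    have : ∀ᵐ y ∂ν, ¬ C < f y := by
      filter_upwards [hC] with y hy
      exact not_lt.2 ((le_abs_self _).trans hy)
    simpa [ae_iff] using this
  -- lower bound for members of the defining set
  have hlb : ∀ μ' : Measure (Euc n), μ' ≪ ν → μ' Set.univ ≠ 0 →
      ∀ a, μ' {x | a < f x} = 0 → -C ≤ a := by
    intro μ' hac h0 a ha
    by_contra h
    rw [not_le] at h
    have hae : ∀ᵐ y ∂μ', |f y| ≤ C := hC.filter_mono hac.ae_le
    have huniv : μ' Set.univ ≤ μ' {x | a < f x} := by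
      apply measure_mono_ae
      rw [ae_le_set]
      have : ∀ᵐ y ∂μ', a < f y := by
        filter_upwards [hae] with y hy
        exact h.trans_le (abs_le.1 hy).1
      simpa [ae_iff, Set.diff_eq, Set.compl_setOf] using this
    exact h0 (le_antisymm (le_of_le_of_eq huniv ha) (zero_le))
  set M := essSup f ν with hM
  -- upper and lower bounds for the ball essential sups
  have hub : ∀ (B : Set (Euc n)), ν B ≠ 0 → essSup f (ν.restrict B) ≤ M := by
    intro B hB
    rw [hM, essSup_eq_sInf, essSup_eq_sInf]
    refine csInf_le_csInf ?_ ⟨C, hCmem ν Measure.AbsolutelyContinuous.rfl⟩ ?_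
    · refine ⟨-C, fun a ha => hlb _ Measure.restrict_le_self.absolutelyContinuous ?_ a ha⟩
      rwa [Measure.restrict_apply_univ]
    · intro a ha
      exact Measure.restrict_le_self.absolutelyContinuous ha
  have hlow : ∀ (B : Set (Euc n)), ν B ≠ 0 → -C ≤ essSup f (ν.restrict B) := by
    intro B hB
    rw [essSup_eq_sInf]
    refine le_csInf ⟨C, hCmem _ Measure.restrict_le_self.absolutelyContinuous⟩ ?_
    intro a ha
    refine hlb _ Measure.restrict_le_self.absolutelyContinuous ?_ a ha
    rwa [Measure.restrict_apply_univ]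
  -- value for null balls
  have hzero : ∀ (B : Set (Euc n)), ν B = 0 → essSup f (ν.restrict B) = 0 := by
    intro B hB
    rw [Measure.restrict_eq_zero.2 hB, essSup_eq_sInf]
    have : {a : ℝ | (0 : Measure (Euc n)) {x | a < f x} = 0} = Set.univ := by
      ext a; simp
    rw [this, csInf_of_not_bddBelow, Real.sInf_empty]
    intro ⟨b, hb⟩
    exact absurd (hb (Set.mem_univ (b - 1))) (by simp)
  -- every point has some ball of positive measure
  have hex : ∀ x : Euc n, ∃ ε : Set.Ioi (0 : ℝ), ν (ball x (ε : ℝ)) ≠ 0 := by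
    intro x
    by_contra h
    push_neg at h
    apply hνuniv
    rw [← iUnion_ball_nat_succ x]
    refine measure_iUnion_null fun k => h ⟨(k : ℝ) + 1, Set.mem_Ioi.2 (by positivity)⟩
  -- each `essLimSup` is at most `M`
  have hstar_le : ∀ x : Euc n, essLimSup ν X f x ≤ M := by
    intro x
    rw [hLim]
    obtain ⟨ε0, hε0⟩ := hex x
    have hbdd : BddBelow (Set.range fun ε : Set.Ioi (0 : ℝ) =>
        essSup f (ν.restrict (ball x (ε : ℝ)))) := by
      refine ⟨min (-C) 0, ?_⟩
      rintro _ ⟨ε, rfl⟩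
      dsimp only
      rcases eq_or_ne (ν (ball x (ε : ℝ))) 0 with h | h
      · rw [hzero _ h]; exact min_le_right _ _
      · exact (min_le_left _ _).trans (hlow _ h)
    exact ciInf_le_of_le hbdd ε0 (hub _ hε0)
  haveI : Nonempty X := (nonempty_of_measure_ne_zero hν0.ne').to_subtype
  have hbddA : BddAbove (Set.range fun x : X => essLimSup ν X f (x : Euc n)) := by
    refine ⟨M, ?_⟩
    rintro _ ⟨x, rfl⟩
    exact hstar_le x
  refine le_antisymm (ciSup_le fun x => hstar_le x) ?_
  -- reverse inequality
  refine le_of_forall_lt fun c hc => ?_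
  obtain ⟨c', hcc', hc'M⟩ := exists_between hc
  obtain ⟨g, hgm, hfg⟩ : ∃ g : Euc n → ℝ, StronglyMeasurable g ∧ f =ᵐ[ν] g :=
    ⟨hf.1.mk f, hf.1.stronglyMeasurable_mk, hf.1.ae_eq_mk⟩
  set S := {y : Euc n | c' < g y} with hS
  have hSm : MeasurableSet S := measurableSet_lt measurable_const hgm.measurable
  have hS0 : ν S ≠ 0 := by
    intro h0
    have hMle : M ≤ c' := by
      rw [hM, essSup_eq_sInf]
      refine csInf_le ⟨-C, fun a ha => hlb ν Measure.AbsolutelyContinuous.rfl hνuniv a ha⟩ ?_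
      have : ∀ᵐ y ∂ν, ¬ c' < f y := by
        have hgle : ∀ᵐ y ∂ν, ¬ c' < g y := by
          rw [ae_iff]; simpa using h0
        filter_upwards [hfg, hgle] with y h1 h2
        rwa [h1]
      simpa [ae_iff] using this
    exact lt_irrefl _ (hMle.trans_lt hc'M)
  -- find a point of `X` around which `S` has positive measure
  have hE := Measure.everywherePosSubset_ae_eq_of_measure_ne_top (μ := ν) hSm (measure_ne_top ν S)
  have hEX : ν (ν.everywherePosSubset S ∩ X) ≠ 0 := by
    intro h0
    apply hS0
    have h1 : ν (ν.everywherePosSubset S) = ν S := measure_congr hE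
    have h2 : ν (ν.everywherePosSubset S) ≤ ν (ν.everywherePosSubset S ∩ X) + ν Xᶜ := by
      refine (measure_mono ?_).trans (measure_union_le _ _)
      intro y hy
      by_cases h : y ∈ X
      · exact Or.inl ⟨hy, h⟩
      · exact Or.inr h
    rw [h0, hνX, add_zero] at h2
    rw [← h1]
    exact le_antisymm h2 (zero_le)
  obtain ⟨x, hxE, hxX⟩ := nonempty_of_measure_ne_zero hEX
  -- around `x`, every ball meets `S` in positive measure
  have hpos : ∀ ε : ℝ, 0 < ε → ν (S ∩ ball x ε) ≠ 0 := by
    intro ε hε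
    have hmem : ball x ε ∩ S ∈ 𝓝[S] x := by
      rw [Set.inter_comm]
      exact inter_mem_nhdsWithin S (ball_mem_nhds x hε)
    have := hxE.2 _ hmem
    rw [Set.inter_comm] at this
    exact this.ne'
  -- hence `c' ≤ essSup` on every ball around `x`
  have hstar_ge : c' ≤ essLimSup ν X f x := by
    rw [hLim]
    refine le_ciInf fun ε => ?_
    rw [essSup_eq_sInf]
    refine le_csInf ⟨C, hCmem _ Measure.restrict_le_self.absolutelyContinuous⟩ ?_
    intro a ha
    by_contra h
    rw [not_le] at h
    have hfg' : f =ᵐ[ν.restrict (ball x (ε : ℝ))] g :=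
      hfg.filter_mono (Measure.restrict_le_self.absolutelyContinuous).ae_le
    have hsub : ν.restrict (ball x (ε : ℝ)) S ≤ ν.restrict (ball x (ε : ℝ)) {y | a < f y} := by
      apply measure_mono_ae
      rw [ae_le_set]
      have : ∀ᵐ y ∂(ν.restrict (ball x (ε : ℝ))), y ∈ S → a < f y := by
        filter_upwards [hfg'] with y h1 h2
        rw [h1]; exact h.trans h2
      simp [ae_iff, Set.diff_eq, Set.compl_setOf] at this; convert this using 2; ext y; simp
    have hrS : ν.restrict (ball x (ε : ℝ)) S = ν (S ∩ ball x (ε : ℝ)) :=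
      Measure.restrict_apply hSm
    have := hpos (ε : ℝ) ε.2
    rw [← hrS] at this
    exact this (le_antisymm (le_of_le_of_eq hsub ha) (zero_le))
  calc c < c' := hcc'
  _ ≤ essLimSup ν X f x := hstar_ge
  _ ≤ ⨆ x : X, essLimSup ν X f (x : Euc n) := le_ciSup hbddA ⟨x, hxX⟩
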